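/- Let F be a field with char(F) > n (or zero), and β ∈ F \ {0,...,n}. If f ∈ F[x_1,...,x_n, y_1,...,y_n] satisfies f(x,y) = 1/(∑_{i=1}^n x_i y_i − β) for all x, y ∈ {0,1}^n, then the F-vector space spanned by the 2^n partial evaluations {f(x, 1_S) : S ⊆ [n]} ⊆ F[x] (where 1_S ∈ {0,1}^n is the indicator vector of S, and we identify each f(x,1_S) with its multilinearization) has dimension at least 2^n. -/

import Mathlib

open MvPolynomial Finset
open scoped Classical


noncomputable def ml {F : Type*} [Field F] {n : ℕ} (f : MvPolynomial (Fin n) F) :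
    MvPolynomial (Fin n) F :=
  ∑ d ∈ f.support,
    MvPolynomial.monomial (d.mapRange (fun a => min a 1) (by simp)) (MvPolynomial.coeff d f)

lemma eval_ml {F : Type*} [Field F] {n : ℕ} (g : MvPolynomial (Fin n) F) (x : Fin n → F)
    (hx : ∀ i, x i = 0 ∨ x i = 1) : eval x (ml g) = eval x g := by
  rw [ml, map_sum, eval_eq' x g]
  refine Finset.sum_congr rfl fun d _ => ?_
  rw [eval_monomial]
  congr 1
  rw [Finsupp.prod_fintype _ _ (fun i => pow_zero _)]
  refine Finset.prod_congr rfl fun i _ => ?_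
  rw [Finsupp.mapRange_apply]
  rcases Nat.eq_zero_or_pos (d i) with h0 | h0
  · simp [h0]
  · have : min (d i) 1 = 1 := by omega
    rw [this, pow_one]
    rcases hx i with h | h
    · rw [h, zero_pow (by omega)]
    · rw [h, one_pow]



lemma partial_frac {F : Type*} [Field F] (m : ℕ) : ∀ (x : F), (∀ j : ℕ, j ≤ m → x + j ≠ 0) →
    ∑ k ∈ range (m+1), (-1:F)^k * (m.choose k) * (x + k)⁻¹
      = (m.factorial : F) * (∏ j ∈ range (m+1), (x + (j:F)))⁻¹ := by
  induction m with
  | zero => intro x hx; simp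
  | succ m ih =>
    intro x hx
    have hx' : ∀ j : ℕ, j ≤ m → (x + 1) + (j:F) ≠ 0 := by
      intro j hj
      intro hc
      exact hx (j+1) (by omega) (by push_cast; linear_combination hc)
    have hx0 : ∀ j : ℕ, j ≤ m → x + (j:F) ≠ 0 := fun j hj => hx j (by omega)
    set f : ℕ → F := fun k => (-1:F)^k * ((m+1).choose k) * (x + k)⁻¹ with hf
    set g : ℕ → F := fun k => (-1:F)^k * (m.choose k) * (x + k)⁻¹ with hg
    have step1 : ∑ k ∈ range (m+2), f k = (∑ k ∈ range (m+1), f (k+1)) + f 0 :=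
      Finset.sum_range_succ' f (m+1)
    have term : ∀ k, f (k+1) =
        -((-1:F)^k * (m.choose k) * ((x+1) + (k:F))⁻¹) + g (k+1) := by
      intro k
      simp only [hf, hg, Nat.choose_succ_succ]
      push_cast
      have h1 : (x + 1) + (k:F) = x + ((k:F)+1) := by ring
      rw [h1]
      ring
    have step2 : ∑ k ∈ range (m+1), g (k+1) =
        (∑ k ∈ range (m+1), g k) - g 0 := by
      have h2 : ∑ k ∈ range (m+2), g k = (∑ k ∈ range (m+1), g (k+1)) + g 0 :=
        Finset.sum_range_succ' g (m+1)
      have h3 : ∑ k ∈ range (m+2), g k = (∑ k ∈ range (m+1), g k) + g (m+1) :=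
        Finset.sum_range_succ g (m+1)
      have h4 : g (m+1) = 0 := by simp [hg, Nat.choose_succ_self]
      rw [h4, add_zero] at h3
      linear_combination h3 - h2
    have hA : ∑ k ∈ range (m+1), g k = (m.factorial : F) * (∏ j ∈ range (m+1), (x + (j:F)))⁻¹ :=
      ih x hx0
    have hB : ∑ k ∈ range (m+1), (-1:F)^k * (m.choose k) * ((x+1) + (k:F))⁻¹
        = (m.factorial : F) * (∏ j ∈ range (m+1), ((x+1) + (j:F)))⁻¹ := ih (x+1) hx'
    have main : ∑ k ∈ range (m+2), f k
        = (∑ k ∈ range (m+1), g k)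
          - ∑ k ∈ range (m+1), (-1:F)^k * (m.choose k) * ((x+1) + (k:F))⁻¹ := by
      rw [step1]
      rw [Finset.sum_congr rfl (fun k _ => term k), Finset.sum_add_distrib, step2,
        Finset.sum_neg_distrib]
      have : f 0 = g 0 := by simp [hf, hg]
      rw [this]; ring
    rw [show m+1+1 = m+2 from rfl, main, hA, hB]
    -- now pure algebra
    set Q := ∏ j ∈ range (m+1), (x + (j:F)) with hQdef
    set R := ∏ j ∈ range (m+1), ((x+1) + (j:F)) with hRdef
    set P := ∏ j ∈ range (m+2), (x + (j:F)) with hPdef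
    have hP1 : P = Q * (x + ((m:F)+1)) := by
      rw [hPdef, hQdef, Finset.prod_range_succ]; push_cast; ring
    have hP2 : P = R * x := by
      rw [hPdef, Finset.prod_range_succ']
      congr 1
      · rw [hRdef]; refine Finset.prod_congr rfl fun j _ => ?_; push_cast; ring
      · simp
    have hQ : Q ≠ 0 := Finset.prod_ne_zero_iff.mpr fun j hj => hx0 j (by
      have := mem_range.mp hj; omega)
    have hR : R ≠ 0 := Finset.prod_ne_zero_iff.mpr fun j hj => hx' j (by
      have := mem_range.mp hj; omega)
    have hx00 : x ≠ 0 := by simpa using hx 0 (by omega)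
    have hlast : x + ((m:F)+1) ≠ 0 := by
      intro hc
      exact hx (m+1) (by omega) (by push_cast; linear_combination hc)
    have hfac : ((m+1).factorial : F) = ((m:F)+1) * (m.factorial : F) := by
      rw [Nat.factorial_succ]; push_cast; ring
    have hQinv : Q⁻¹ = (x + ((m:F)+1)) * P⁻¹ := by
      rw [hP1, mul_inv]
      field_simp
    have hRinv : R⁻¹ = x * P⁻¹ := by
      rw [hP2, mul_inv]
      field_simp
    rw [hfac, hQinv, hRinv]
    ring

noncomputable def Phi {F : Type*} [Field F] {n : ℕ} (β : F) (S T : Finset (Fin n)) : F :=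
  ∑ U ∈ S.powerset, (-1:F)^(S.card - U.card) * (((U ∩ T).card : F) - β)⁻¹

lemma phi_eq_zero {F : Type*} [Field F] {n : ℕ} (β : F) (S T : Finset (Fin n))
    (h : ¬ S ⊆ T) : Phi β S T = 0 := by
  obtain ⟨j, hjS, hjT⟩ : ∃ j ∈ S, j ∉ T := by
    by_contra hc; push_neg at hc; exact h hc
  have hS : S = insert j (S.erase j) := (Finset.insert_erase hjS).symm
  have hj' : j ∉ S.erase j := Finset.notMem_erase j S
  rw [Phi, show S.powerset = (insert j (S.erase j)).powerset from by rw [← hS]]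
  rw [Finset.sum_powerset_insert hj', ← Finset.sum_add_distrib]
  refine Finset.sum_eq_zero fun U hU => ?_
  have hUS' : U ⊆ S.erase j := Finset.mem_powerset.mp hU
  have hjU : j ∉ U := fun hc => hj' (hUS' hc)
  have hcard : (insert j U).card = U.card + 1 := Finset.card_insert_of_notMem hjU
  have hint : insert j U ∩ T = U ∩ T := by
    ext a; simp only [Finset.mem_inter, Finset.mem_insert]
    constructor
    · rintro ⟨(rfl | ha), hb⟩
      · exact absurd hb hjT
      · exact ⟨ha, hb⟩
    · rintro ⟨ha, hb⟩; exact ⟨Or.inr ha, hb⟩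
  have hUcard : U.card ≤ (S.erase j).card := Finset.card_le_card hUS'
  have hScard : S.card = (S.erase j).card + 1 := (Finset.card_erase_add_one hjS).symm
  rw [hint, hcard]
  have hsign : (-1:F)^(S.card - U.card) = -(-1:F)^(S.card - (U.card+1)) := by
    have h1 : S.card - U.card = (S.card - (U.card+1)) + 1 := by omega
    rw [h1, pow_succ]; ring
  rw [hsign]; ring

lemma phi_ne_zero {F : Type*} [Field F] {n : ℕ} (p : ℕ) [CharP F p] (hp : p = 0 ∨ n < p)
    (β : F) (hβ : ∀ k : ℕ, k ≤ n → β ≠ (k : F)) (S : Finset (Fin n)) :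
    Phi β S S ≠ 0 := by
  have hcard : S.card ≤ n := by
    have := Finset.card_le_univ S
    simpa using this
  set m := S.card with hm
  have hstep : Phi β S S = ∑ k ∈ range (m+1), (m.choose k) •
      ((-1:F)^(m-k) * ((k:F) - β)⁻¹) := by
    rw [Phi]
    calc (∑ U ∈ S.powerset, (-1:F)^(S.card - U.card) * (((U ∩ S).card : F) - β)⁻¹)
        = ∑ U ∈ S.powerset, (fun c : ℕ => (-1:F)^(m - c) * ((c:F) - β)⁻¹) U.card :=
          Finset.sum_congr rfl fun U hU => by
            rw [Finset.inter_eq_left.mpr (Finset.mem_powerset.mp hU)]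
      _ = ∑ k ∈ range (S.card + 1), (S.card).choose k •
            (fun c : ℕ => (-1:F)^(m - c) * ((c:F) - β)⁻¹) k :=
          Finset.sum_powerset_apply_card (fun c : ℕ => (-1:F)^(m - c) * ((c:F) - β)⁻¹)
      _ = ∑ k ∈ range (m+1), (m.choose k) • ((-1:F)^(m-k) * ((k:F) - β)⁻¹) := by
          rw [← hm]
  have hβ' : ∀ j : ℕ, j ≤ m → (-β) + (j:F) ≠ 0 := by
    intro j hj hc
    exact hβ j (le_trans hj hcard) (by linear_combination -hc)
  have hsum : Phi β S S = (-1:F)^m *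
      ∑ k ∈ range (m+1), (-1:F)^k * (m.choose k) * ((-β) + (k:F))⁻¹ := by
    rw [hstep, Finset.mul_sum]
    refine Finset.sum_congr rfl fun k hk => ?_
    have hk' : k ≤ m := by have := mem_range.mp hk; omega
    have hsgn : (-1:F)^m * (-1:F)^k = (-1:F)^(m-k) := by
      rw [← pow_add, show m + k = (m-k) + 2*k from by omega, pow_add, pow_mul]
      simp
    rw [nsmul_eq_mul, ← hsgn]
    have harg : ((k:F) - β) = (-β) + (k:F) := by ring
    rw [harg]; ring
  rw [hsum, partial_frac m (-β) hβ']
  have hfac : (m.factorial : F) ≠ 0 := by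
    rcases hp with hp0 | hpn
    · subst hp0
      haveI : CharZero F := CharP.charP_to_charZero F
      exact_mod_cast Nat.cast_ne_zero.mpr (Nat.factorial_ne_zero m)
    · have hpprime : p.Prime := ((CharP.char_is_prime_or_zero F p).resolve_right (by omega))
      rw [Ne, CharP.cast_eq_zero_iff F p]
      intro hdvd
      have := (Nat.Prime.dvd_factorial hpprime).mp hdvd
      omega
  have hprod : (∏ j ∈ range (m+1), ((-β) + (j:F))) ≠ 0 :=
    Finset.prod_ne_zero_iff.mpr fun j hj => hβ' j (by have := mem_range.mp hj; omega)
  intro hc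
  rcases mul_eq_zero.mp hc with h1 | h2
  · exact pow_ne_zero m (by norm_num : (-1:F) ≠ 0) h1
  · rcases mul_eq_zero.mp h2 with h3 | h4
    · exact hfac h3
    · exact hprod (by simpa using inv_eq_zero.mp h4)

section evalv
variable {F : Type*} [Field F] {n : ℕ}

noncomputable def indF (U : Finset (Fin n)) : Fin n → F := fun i => if i ∈ U then 1 else 0

lemma eval_v (β : F) (f : MvPolynomial (Fin n ⊕ Fin n) F)
    (hagree : ∀ x y : Fin n → F, (∀ i, x i = 0 ∨ x i = 1) → (∀ i, y i = 0 ∨ y i = 1) →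
      MvPolynomial.eval (Sum.elim x y) f = ((∑ i : Fin n, x i * y i) - β)⁻¹)
    (U T : Finset (Fin n)) :
    eval (indF U) (ml (MvPolynomial.aeval
        (Sum.elim (fun i : Fin n => (X i : MvPolynomial (Fin n) F))
          (fun j : Fin n => if j ∈ T then 1 else 0)) f))
      = (((U ∩ T).card : F) - β)⁻¹ := by
  have hU01 : ∀ i, indF (F := F) U i = 0 ∨ indF (F := F) U i = 1 := by
    intro i; unfold indF; split <;> simp
  have hT01 : ∀ i, indF (F := F) T i = 0 ∨ indF (F := F) T i = 1 := by
    intro i; unfold indF; split <;> simp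
  rw [eval_ml _ _ hU01]
  set σ : (Fin n ⊕ Fin n) → MvPolynomial (Fin n) F :=
    Sum.elim (fun i : Fin n => (X i : MvPolynomial (Fin n) F))
      (fun j : Fin n => if j ∈ T then 1 else 0) with hσ
  have h1 : (MvPolynomial.aeval σ) f = eval₂ C σ f := by
    rw [aeval_def, algebraMap_eq]
  have h2 : eval (indF U) (eval₂ C σ f) = eval (eval (indF U) ∘ σ) f :=
    (eval_assoc σ (indF U) f).symm
  have h3 : eval (indF U) ∘ σ = Sum.elim (indF (F := F) U) (indF (F := F) T) := by
    funext s
    cases s with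
    | inl i => simp [hσ, indF]
    | inr j =>
      simp only [Function.comp_apply, hσ, Sum.elim_inr, Sum.elim_inl, indF]
      split <;> simp
  rw [h1, h2, h3, hagree _ _ hU01 hT01]
  congr 2
  have : ∀ i : Fin n, indF (F := F) U i * indF (F := F) T i
      = if i ∈ U ∩ T then (1:F) else 0 := by
    intro i
    unfold indF
    by_cases hi : i ∈ U <;> by_cases hj : i ∈ T <;> simp [hi, hj]
  rw [Finset.sum_congr rfl fun i _ => this i]
  rw [Finset.sum_ite_mem, Finset.univ_inter, Finset.sum_const, nsmul_eq_mul, mul_one]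

end evalv

theorem stmt17 {F : Type*} [Field F] (n : ℕ) (p : ℕ) [CharP F p] (hp : p = 0 ∨ n < p)
    (β : F) (hβ : ∀ k : ℕ, k ≤ n → β ≠ (k : F))
    (f : MvPolynomial (Fin n ⊕ Fin n) F)
    (hagree : ∀ x y : Fin n → F, (∀ i, x i = 0 ∨ x i = 1) → (∀ i, y i = 0 ∨ y i = 1) →
      MvPolynomial.eval (Sum.elim x y) f = ((∑ i : Fin n, x i * y i) - β)⁻¹) :
    (2 ^ n : Cardinal) ≤
      Module.rank F (Submodule.span F {q : MvPolynomial (Fin n) F |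
        ∃ S : Finset (Fin n),
          q = ml (MvPolynomial.aeval
            (Sum.elim (fun i : Fin n => (X i : MvPolynomial (Fin n) F))
              (fun j : Fin n => if j ∈ S then 1 else 0)) f)}) := by
  set v : Finset (Fin n) → MvPolynomial (Fin n) F := fun S =>
    ml (MvPolynomial.aeval
      (Sum.elim (fun i : Fin n => (X i : MvPolynomial (Fin n) F))
        (fun j : Fin n => if j ∈ S then 1 else 0)) f) with hv
  set W := Submodule.span F {q : MvPolynomial (Fin n) F |
    ∃ S : Finset (Fin n),
      q = ml (MvPolynomial.aeval
        (Sum.elim (fun i : Fin n => (X i : MvPolynomial (Fin n) F))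
          (fun j : Fin n => if j ∈ S then 1 else 0)) f)} with hW
  have hmem : ∀ S, v S ∈ W := fun S => Submodule.subset_span ⟨S, rfl⟩
  -- linear independence of v
  have hind : LinearIndependent F v := by
    rw [linearIndependent_iff']
    intro s g hsum S hS
    by_contra hgS
    set t := s.filter (fun T => g T ≠ 0) with ht
    have htne : t.Nonempty := ⟨S, Finset.mem_filter.mpr ⟨hS, hgS⟩⟩
    obtain ⟨M, hMt, hmax⟩ : ∃ M ∈ t, ∀ x ∈ t, ¬ M < x := by
      obtain ⟨M, hM⟩ := Finset.exists_maximal htne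
      exact ⟨M, hM.1, fun x hx hlt => lt_irrefl M (lt_of_lt_of_le hlt (hM.2 hx hlt.le))⟩
    have hMs : M ∈ s := (Finset.mem_filter.mp hMt).1
    have hgM : g M ≠ 0 := (Finset.mem_filter.mp hMt).2
    -- evaluate the relation at each boolean point
    have heval : ∀ U : Finset (Fin n),
        ∑ T ∈ s, g T * (((U ∩ T).card : F) - β)⁻¹ = 0 := by
      intro U
      have := congrArg (eval (indF (F := F) U)) hsum
      rw [map_sum, map_zero] at this
      rw [← this]
      refine Finset.sum_congr rfl fun T _ => ?_
      rw [smul_eq_C_mul, map_mul, eval_C]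
      congr 1
      exact (eval_v β f hagree U T).symm
    have hkey : ∑ T ∈ s, g T * Phi β M T = 0 := by
      calc ∑ T ∈ s, g T * Phi β M T
          = ∑ T ∈ s, ∑ U ∈ M.powerset,
              g T * ((-1:F)^(M.card - U.card) * (((U ∩ T).card : F) - β)⁻¹) := by
            refine Finset.sum_congr rfl fun T _ => ?_
            rw [Phi, Finset.mul_sum]
        _ = ∑ U ∈ M.powerset, ∑ T ∈ s,
              g T * ((-1:F)^(M.card - U.card) * (((U ∩ T).card : F) - β)⁻¹) :=
            Finset.sum_comm
        _ = ∑ U ∈ M.powerset, (-1:F)^(M.card - U.card) *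
              ∑ T ∈ s, g T * (((U ∩ T).card : F) - β)⁻¹ := by
            refine Finset.sum_congr rfl fun U _ => ?_
            rw [Finset.mul_sum]
            refine Finset.sum_congr rfl fun T _ => ?_
            ring
        _ = 0 := by
            refine Finset.sum_eq_zero fun U _ => ?_
            rw [heval U, mul_zero]
    have hsingle : ∑ T ∈ s, g T * Phi β M T = g M * Phi β M M := by
      refine Finset.sum_eq_single M (fun T hTs hTne => ?_) (fun h => absurd hMs h)
      by_cases hgT : g T = 0
      · rw [hgT, zero_mul]
      · have hTt : T ∈ t := Finset.mem_filter.mpr ⟨hTs, hgT⟩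
        have : ¬ M ⊆ T := fun hsub => hmax T hTt
          (lt_of_le_of_ne hsub (fun h => hTne h.symm))
        rw [phi_eq_zero β M T this, mul_zero]
    rw [hsingle] at hkey
    exact hgM (by
      rcases mul_eq_zero.mp hkey with h | h
      · exact h
      · exact absurd h (phi_ne_zero p hp β hβ M))
  -- transfer to the submodule
  have hindW : LinearIndependent F (fun S : Finset (Fin n) => (⟨v S, hmem S⟩ : W)) := by
    apply LinearIndependent.of_comp W.subtype
    convert hind
    rfl
  have hle := hindW.cardinal_lift_le_rank
  simp only [Cardinal.mk_fintype, Fintype.card_finset, Fintype.card_fin,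
    Cardinal.lift_natCast, Cardinal.lift_id, Cardinal.lift_id'] at hle
  exact_mod_cast hle
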